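/- Let r ≥ 1, let n ≥ 1, let X be a real r × n matrix with columns x₁, …, x_n, and define χ_X(i₁,…,i_r) = sgn det(x_{i₁}, …, x_{i_r}) for indices i₁,…,i_r ∈ {1,…,n}. Suppose i₁,…,i_r, j₁,…,j_r ∈ {1,…,n} are such that for every k ∈ {1,…,r}, χ_X(j_k, i₂, …, i_r) · χ_X(j₁, …, j_{k−1}, i₁, j_{k+1}, …, j_r) ≥ 0. Then χ_X(i₁, …, i_r) · χ_X(j₁, …, j_r) ≥ 0. -/

import Mathlib

/-- The chirotope of a real r × n matrix `X`: the sign of the determinant of the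
r × r matrix whose b-th column is the `i b`-th column of `X`. -/
noncomputable def chi {r n : ℕ} (X : Matrix (Fin r) (Fin n) ℝ)
    (i : Fin r → Fin n) : ℝ :=
  Real.sign (Matrix.det (X.submatrix id i))

open Matrix in
private lemma sign_nonneg_iff' {x : ℝ} : 0 ≤ Real.sign x ↔ 0 ≤ x := by
  rcases lt_trichotomy x 0 with hx | rfl | hx
  · simp [Real.sign_of_neg hx, not_le.mpr hx]
  · simp
  · simp [Real.sign_of_pos hx, hx.le]

private lemma sign_mul_sign (a b : ℝ) : Real.sign a * Real.sign b = Real.sign (a * b) := by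
  rcases lt_trichotomy a 0 with ha | rfl | ha <;> rcases lt_trichotomy b 0 with hb | rfl | hb
  · rw [Real.sign_of_neg ha, Real.sign_of_neg hb,
      Real.sign_of_pos (mul_pos_of_neg_of_neg ha hb)]; ring
  · simp
  · rw [Real.sign_of_neg ha, Real.sign_of_pos hb,
      Real.sign_of_neg (mul_neg_of_neg_of_pos ha hb)]; ring
  · simp
  · simp
  · simp
  · rw [Real.sign_of_pos ha, Real.sign_of_neg hb,
      Real.sign_of_neg (mul_neg_of_pos_of_neg ha hb)]; ring
  · simp
  · rw [Real.sign_of_pos ha, Real.sign_of_pos hb, Real.sign_of_pos (mul_pos ha hb)]; ring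

private lemma sign_mul_nonneg_iff (a b : ℝ) :
    0 ≤ Real.sign a * Real.sign b ↔ 0 ≤ a * b := by
  rw [sign_mul_sign]; exact sign_nonneg_iff'

/-- Grassmann–Plücker determinant identity, phrased for families of rows. -/
private lemma gp_det (r : ℕ) (z : Fin r) (w y : Fin r → Fin r → ℝ) :
    (Matrix.of w).det * (Matrix.of y).det =
      ∑ k : Fin r, (Matrix.of (Function.update w z (y k))).det *
        (Matrix.of (Function.update y k (w z))).det := by
  have : Nonempty (Fin r) := ⟨z⟩
  set f : (Fin r → ℝ) [⋀^Fin r]→ₗ[ℝ] ℝ := Matrix.detRowAlternating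
  have hdet : ∀ v : Fin r → Fin r → ℝ, (Matrix.of v).det = f v := fun _ => rfl
  simp only [hdet]
  by_cases hy : LinearIndependent ℝ y
  · -- the rows of `y` form a basis
    have hcard : Fintype.card (Fin r) = Module.finrank ℝ (Fin r → ℝ) := by simp
    set b := basisOfLinearIndependentOfCardEqFinrank hy hcard with hb
    have hbc : ⇑b = y := coe_basisOfLinearIndependentOfCardEqFinrank hy hcard
    set c : Fin r → ℝ := fun k => b.repr (w z) k with hc
    have hw : w z = ∑ k : Fin r, c k • y k := by
      conv_lhs => rw [← b.sum_repr (w z)]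
      simp [hbc, hc]
    have hlhs : f w = ∑ k : Fin r, c k * f (Function.update w z (y k)) := by
      conv_lhs => rw [← Function.update_eq_self z w, hw, f.map_update_sum]
      refine Finset.sum_congr rfl fun k _ => ?_
      rw [f.map_update_smul, smul_eq_mul]
    have hrhs : ∀ k : Fin r, f (Function.update y k (w z)) = c k * f y := by
      intro k
      rw [hw, f.map_update_sum]
      rw [Finset.sum_eq_single k]
      · rw [f.map_update_smul, smul_eq_mul, Function.update_eq_self]
      · intro l _ hlk
        rw [f.map_update_smul, f.map_update_self _ hlk.symm, smul_zero]
      · intro hk; exact absurd (Finset.mem_univ k) hk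
    calc f w * f y = (∑ k : Fin r, c k * f (Function.update w z (y k))) * f y := by
            rw [hlhs]
      _ = ∑ k : Fin r, f (Function.update w z (y k)) * f (Function.update y k (w z)) := by
            rw [Finset.sum_mul]
            exact Finset.sum_congr rfl fun k _ => by rw [hrhs k]; ring
  · -- dependent rows: both sides vanish
    have hfy : f y = 0 := f.map_linearDependent y hy
    obtain ⟨g, hg, m, hgm⟩ := Fintype.not_linearIndependent_iff.mp hy
    set d : Fin r → ℝ := fun k => -(g m)⁻¹ * g k with hd
    have hym : y m = ∑ k ∈ Finset.univ.erase m, d k • y k := by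
      have h1 : g m • y m + ∑ k ∈ Finset.univ.erase m, g k • y k = 0 :=
        (Finset.add_sum_erase Finset.univ (fun k => g k • y k) (Finset.mem_univ m)).trans hg
      have hsum : ∑ k ∈ Finset.univ.erase m, g k • y k = -(g m • y m) :=
        eq_neg_of_add_eq_zero_right h1
      have h2 : ∑ k ∈ Finset.univ.erase m, d k • y k =
          (-(g m)⁻¹) • ∑ k ∈ Finset.univ.erase m, g k • y k := by
        rw [Finset.smul_sum]
        exact Finset.sum_congr rfl fun k _ => by rw [smul_smul]
      rw [h2, hsum, smul_neg, neg_smul, neg_neg, smul_smul, inv_mul_cancel₀ hgm, one_smul]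
    -- for k ≠ m, express f (update y k u) via f (update y m u)
    have key : ∀ (u : Fin r → ℝ) (k : Fin r), k ≠ m →
        f (Function.update y k u) = -(d k) * f (Function.update y m u) := by
      intro u k hkm
      have hswap : Function.update (Function.update y k u) m (y k) =
          (Function.update y m u) ∘ Equiv.swap k m := by
        funext x
        rcases eq_or_ne x k with rfl | hxk
        · simp [Function.update_apply, hkm, Equiv.swap_apply_left]
        rcases eq_or_ne x m with rfl | hxm
        · simp [Function.update_apply, Ne.symm hkm, Equiv.swap_apply_right, hkm]
        · simp [Function.update_apply, hxk, hxm, Equiv.swap_apply_of_ne_of_ne hxk hxm]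
      have h0 : f (Function.update y k u) =
          f (Function.update (Function.update y k u) m (y m)) := by
        rw [show y m = (Function.update y k u) m from
          (Function.update_of_ne (Ne.symm hkm) u y).symm, Function.update_eq_self]
      rw [h0, hym, f.map_update_sum, Finset.sum_eq_single k]
      · rw [f.map_update_smul, smul_eq_mul, hswap, f.map_swap _ hkm]
        ring
      · intro l hl hlk
        have hlm : l ≠ m := (Finset.mem_erase.mp hl).1
        refine (f.map_update_smul _ _ _ _).trans (smul_eq_zero_of_right _ ?_)
        refine f.map_eq_zero_of_eq _ (i := l) (j := m) ?_ hlm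
        simp [Function.update_apply, hlm, hlk]
      · intro hk; exact absurd (Finset.mem_erase.mpr ⟨hkm, Finset.mem_univ k⟩) hk
    have hAm : f (Function.update w z (y m)) =
        ∑ k ∈ Finset.univ.erase m, d k * f (Function.update w z (y k)) := by
      rw [hym, f.map_update_sum]
      exact Finset.sum_congr rfl fun k _ => by rw [f.map_update_smul, smul_eq_mul]
    rw [hfy, mul_zero]
    symm
    calc ∑ k : Fin r, f (Function.update w z (y k)) * f (Function.update y k (w z))
        = f (Function.update w z (y m)) * f (Function.update y m (w z)) +
            ∑ k ∈ Finset.univ.erase m,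
              f (Function.update w z (y k)) * f (Function.update y k (w z)) :=
          (Finset.add_sum_erase Finset.univ _ (Finset.mem_univ m)).symm
      _ = f (Function.update w z (y m)) * f (Function.update y m (w z)) +
            ∑ k ∈ Finset.univ.erase m,
              (-(d k * f (Function.update w z (y k)))) * f (Function.update y m (w z)) := by
          congr 1
          refine Finset.sum_congr rfl fun k hk => ?_
          rw [key (w z) k (Finset.mem_erase.mp hk).1]; ring
      _ = (f (Function.update w z (y m)) -
            ∑ k ∈ Finset.univ.erase m, d k * f (Function.update w z (y k))) *
            f (Function.update y m (w z)) := by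
          rw [sub_mul, Finset.sum_mul, sub_eq_add_neg, ← Finset.sum_neg_distrib]
          congr 1
          exact Finset.sum_congr rfl fun k _ => by ring
      _ = 0 := by rw [← hAm, sub_self, zero_mul]

open Matrix in
/-- The third chirotope axiom (the Grassmann–Plücker sign condition) holds for the
chirotope of any real matrix. -/
theorem chirotope_grassmann_plucker (r n : ℕ) (hr : 1 ≤ r) (hn : 1 ≤ n)
    (X : Matrix (Fin r) (Fin n) ℝ) (i j : Fin r → Fin n)
    (h : ∀ k : Fin r,
      0 ≤ chi X (Function.update i ⟨0, hr⟩ (j k)) *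
        chi X (Function.update j k (i ⟨0, hr⟩))) :
    0 ≤ chi X i * chi X j := by
  set z : Fin r := ⟨0, hr⟩
  set w : Fin r → Fin r → ℝ := Xᵀ ∘ i with hw
  set y : Fin r → Fin r → ℝ := Xᵀ ∘ j with hy
  have hchi : ∀ v : Fin r → Fin n, chi X v = Real.sign ((Matrix.of (Xᵀ ∘ v)).det) := by
    intro v
    rw [chi, ← Matrix.det_transpose]
    rfl
  rw [hchi, hchi, sign_mul_nonneg_iff, ← hw, ← hy, gp_det r z w y]
  refine Finset.sum_nonneg fun k _ => ?_
  have hk := h k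
  rw [hchi, hchi] at hk
  have e1 : Function.update w z (y k) = Xᵀ ∘ Function.update i z (j k) :=
    (Function.comp_update (Xᵀ : Fin n → Fin r → ℝ) i z (j k)).symm
  have e2 : Function.update y k (w z) = Xᵀ ∘ Function.update j k (i z) :=
    (Function.comp_update (Xᵀ : Fin n → Fin r → ℝ) j k (i z)).symm
  rw [e1, e2, ← sign_mul_nonneg_iff]
  exact hk
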